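/- Let r ≥ 2, let d_1, …, d_r ∈ ℕ, and let X ⊆ ℝ^{d_1} × ⋯ × ℝ^{d_r} be a semilinear set (of some description complexity (s, t)). Assume that X does not contain any product A_1 × ⋯ × A_r with every A_i ⊆ ℝ^{d_i} infinite. Then there exists α = α(X) ∈ ℝ such that for all finite sets V_i ⊆ ℝ^{d_i}, setting n := Σ_{i=1}^r |V_i|, one has |X ∩ (V_1 × ⋯ × V_r)| ≤ α · n^{r−1}. -/

import Mathlib

/-- A subset of `ℝ^{d₁} × ⋯ × ℝ^{d_r}` is a semilinear cell with (at most) `s` conditions: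
it is cut out by `p` non-strict and `s - p` strict affine-linear inequalities. -/
def IsSemilinearCell {r : ℕ} {d : Fin r → ℕ} (s : ℕ)
    (X : Set (∀ i, Fin (d i) → ℝ)) : Prop :=
  ∃ p : ℕ, p ≤ s ∧ ∃ (lam : Fin s → ∀ i, Fin (d i) → ℝ) (a : Fin s → ℝ),
    X = {x | ∀ q : Fin s,
      ((q : ℕ) < p → (∑ i, ∑ c, lam q i c * x i c) + a q ≤ 0) ∧
      (p ≤ (q : ℕ) → (∑ i, ∑ c, lam q i c * x i c) + a q < 0)}

/-- `X ⊆ ℝ^{d₁} × ⋯ × ℝ^{d_r}` is semilinear of description complexity `(s, t)`: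
a union of at most `t` cells, each defined by at most `s` linear (in)equalities. -/
def IsSemilinearOfComplexity {r : ℕ} {d : Fin r → ℕ} (s t : ℕ)
    (X : Set (∀ i, Fin (d i) → ℝ)) : Prop :=
  ∃ t' ≤ t, ∃ C : Fin t' → Set (∀ i, Fin (d i) → ℝ),
    (∀ j, IsSemilinearCell s (C j)) ∧ X = ⋃ j, C j

open Finset

variable {r s : ℕ} {d : Fin r → ℕ}

/-- The linear part of the `q`-th constraint. -/
noncomputable def LL (lam : Fin s → ∀ i, Fin (d i) → ℝ) (q : Fin s) :
    (∀ i, Fin (d i) → ℝ) →ₗ[ℝ] ℝ where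
  toFun x := ∑ i, ∑ c, lam q i c * x i c
  map_add' x y := by
    simp [Pi.add_apply, mul_add, Finset.sum_add_distrib]
  map_smul' t x := by
    simp [Finset.mul_sum, smul_eq_mul, mul_left_comm]

/-- The contribution of block `i` to the linear part of the `q`-th constraint. -/
noncomputable def gB (lam : Fin s → ∀ i, Fin (d i) → ℝ) (q : Fin s) (i : Fin r)
    (v : Fin (d i) → ℝ) : ℝ := ∑ c, lam q i c * v c

lemma LL_eq_sum_gB (lam : Fin s → ∀ i, Fin (d i) → ℝ) (q : Fin s)
    (x : ∀ i, Fin (d i) → ℝ) : LL lam q x = ∑ i, gB lam q i (x i) := rfl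

lemma gB_smul (lam : Fin s → ∀ i, Fin (d i) → ℝ) (q : Fin s) (i : Fin r)
    (t : ℝ) (v : Fin (d i) → ℝ) : gB lam q i (t • v) = t * gB lam q i v := by
  simp [gB, Finset.mul_sum, smul_eq_mul, mul_left_comm]

lemma gB_sub (lam : Fin s → ∀ i, Fin (d i) → ℝ) (q : Fin s) (i : Fin r)
    (u v : Fin (d i) → ℝ) : gB lam q i (u - v) = gB lam q i u - gB lam q i v := by
  simp [gB, mul_sub, Finset.sum_sub_distrib]

lemma LL_apply (lam : Fin s → ∀ i, Fin (d i) → ℝ) (q : Fin s) (x : ∀ i, Fin (d i) → ℝ) :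
    LL lam q x = ∑ i, ∑ c, lam q i c * x i c := rfl

lemma proj_inj (hr : 1 ≤ r) (p : ℕ) (lam : Fin s → ∀ i, Fin (d i) → ℝ) (a : Fin s → ℝ)
    (C : Set (∀ i, Fin (d i) → ℝ))
    (hC : C = {x | ∀ q : Fin s,
      ((q : ℕ) < p → (∑ i, ∑ c, lam q i c * x i c) + a q ≤ 0) ∧
      (p ≤ (q : ℕ) → (∑ i, ∑ c, lam q i c * x i c) + a q < 0)})
    (hne : C.Nonempty)
    (hfree : ¬ ∃ A : ∀ i, Set (Fin (d i) → ℝ), (∀ i, (A i).Infinite) ∧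
      {x | ∀ i, x i ∈ A i} ⊆ C) :
    ∃ i0 : Fin r, ∀ x ∈ C, ∀ y ∈ C, (∀ j, j ≠ i0 → x j = y j) → x = y := by
  classical
  have hFle : ∀ x ∈ C, ∀ q, LL lam q x + a q ≤ 0 := by
    intro x hx q
    rw [hC] at hx
    rcases hx q with ⟨h1, h2⟩
    rw [LL_apply]
    by_cases hq : (q : ℕ) < p
    · exact h1 hq
    · exact le_of_lt (h2 (le_of_not_gt hq))
  have hFlt : ∀ x ∈ C, ∀ q : Fin s, p ≤ (q : ℕ) → LL lam q x + a q < 0 := by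
    intro x hx q hq
    rw [hC] at hx
    rw [LL_apply]
    exact (hx q).2 hq
  set E : Fin s → Prop := fun q => ∀ x ∈ C, LL lam q x + a q = 0 with hE
  obtain ⟨x₀, hx₀⟩ := hne
  have hz : ∀ q, ∃ w, w ∈ C ∧ (¬ E q → LL lam q w + a q < 0) := by
    intro q
    by_cases hq : E q
    · exact ⟨x₀, hx₀, fun h => absurd hq h⟩
    · have hq' : ∃ x ∈ C, LL lam q x + a q ≠ 0 := by
        by_contra hcon
        push_neg at hcon
        exact hq (fun x hx => hcon x hx)
      obtain ⟨w, hw, hwne⟩ := hq'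
      exact ⟨w, hw, fun _ => lt_of_le_of_ne (hFle w hw q) hwne⟩
  choose z hzC hzlt using hz
  set xstar : ∀ i, Fin (d i) → ℝ := (((s : ℝ) + 1)⁻¹) • (x₀ + ∑ q, z q) with hxstar
  have hs1 : ((s : ℝ) + 1) ≠ 0 := by positivity
  have hLstar : ∀ q, LL lam q xstar + a q =
      ((s : ℝ) + 1)⁻¹ * ((LL lam q x₀ + a q) + ∑ q', (LL lam q (z q') + a q)) := by
    intro q
    have h1 : LL lam q xstar = ((s : ℝ) + 1)⁻¹ * (LL lam q x₀ + ∑ q', LL lam q (z q')) := by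
      rw [hxstar, map_smul, map_add, map_sum]
      simp [smul_eq_mul]
    rw [h1, Finset.sum_add_distrib, Finset.sum_const, card_univ, Fintype.card_fin]
    field_simp
    ring
  have hstar_le : ∀ q, LL lam q xstar + a q ≤ 0 := by
    intro q
    rw [hLstar q]
    have h0 : LL lam q x₀ + a q ≤ 0 := hFle x₀ hx₀ q
    have hsum : ∑ q', (LL lam q (z q') + a q) ≤ 0 :=
      Finset.sum_nonpos fun q' _ => hFle (z q') (hzC q') q
    have hinv : (0:ℝ) ≤ ((s : ℝ) + 1)⁻¹ := by positivity
    exact mul_nonpos_of_nonneg_of_nonpos hinv (by linarith)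
  have hstar_lt : ∀ q : Fin s, (p ≤ (q : ℕ) ∨ ¬ E q) → LL lam q xstar + a q < 0 := by
    intro q hq
    rw [hLstar q]
    have hinv : (0:ℝ) < ((s : ℝ) + 1)⁻¹ := by positivity
    have h0 : LL lam q x₀ + a q ≤ 0 := hFle x₀ hx₀ q
    have hsum : ∑ q', (LL lam q (z q') + a q) ≤ 0 :=
      Finset.sum_nonpos fun q' _ => hFle (z q') (hzC q') q
    rcases hq with hq | hq
    · have : LL lam q x₀ + a q < 0 := hFlt x₀ hx₀ q hq
      exact mul_neg_of_pos_of_neg hinv (by linarith)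
    · have hstrict : ∑ q', (LL lam q (z q') + a q) < 0 := by
        have hh := hzlt q hq
        calc ∑ q', (LL lam q (z q') + a q) < ∑ _q' : Fin s, (0:ℝ) := by
              apply Finset.sum_lt_sum (fun q' _ => hFle (z q') (hzC q') q)
              exact ⟨q, Finset.mem_univ q, hh⟩
          _ = 0 := by simp
      exact mul_neg_of_pos_of_neg hinv (by linarith)
  have hstar_mem : xstar ∈ C := by
    rw [hC]
    intro q
    refine ⟨fun _ => ?_, fun hq => ?_⟩
    · have h := hstar_le q; rw [LL_apply] at h; exact h
    · have h := hstar_lt q (Or.inl hq); rw [LL_apply] at h; exact h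
  have hEp : ∀ q, E q → (q : ℕ) < p := by
    intro q hq
    by_contra h
    have h1 := hFlt x₀ hx₀ q (le_of_not_gt h)
    have h2 := hq x₀ hx₀
    linarith
  have hδ : ∃ δ : ℝ, 0 < δ ∧ ∀ q, ¬ E q → LL lam q xstar + a q ≤ -δ := by
    set B := Finset.univ.filter (fun q => ¬ E q) with hB
    rcases B.eq_empty_or_nonempty with hBe | hBne
    · refine ⟨1, one_pos, fun q hq => ?_⟩
      exfalso
      have hmem : q ∈ B := Finset.mem_filter.2 ⟨Finset.mem_univ q, hq⟩
      rw [hBe] at hmem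
      exact Finset.notMem_empty q hmem
    · refine ⟨B.inf' hBne (fun q => -(LL lam q xstar + a q)), ?_, ?_⟩
      · rw [Finset.lt_inf'_iff]
        intro q hq
        have hqE : ¬ E q := (Finset.mem_filter.1 hq).2
        have hh := hstar_lt q (Or.inr hqE)
        linarith
      · intro q hq
        have hh := Finset.inf'_le (s := B) (fun q => -(LL lam q xstar + a q))
          (Finset.mem_filter.2 ⟨Finset.mem_univ q, hq⟩)
        linarith
  obtain ⟨δ, hδpos, hδle⟩ := hδ
  by_cases hK : ∀ i, ∃ v : Fin (d i) → ℝ, v ≠ 0 ∧ ∀ q, E q → gB lam q i v = 0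
  · exfalso
    choose v hv0 hvE using hK
    set Si : Fin r → ℝ := fun i => ∑ q, |gB lam q i (v i)| with hSi
    have hSinn : ∀ i, 0 ≤ Si i := fun i => Finset.sum_nonneg fun q _ => abs_nonneg _
    have hrpos : (0:ℝ) < r := by
      have h1 : (1:ℝ) ≤ r := by exact_mod_cast hr
      linarith
    set cc : Fin r → ℝ := fun i => δ / (2 * r * (1 + Si i)) with hcc
    have hccpos : ∀ i, 0 < cc i := by
      intro i
      have h1 := hSinn i
      apply div_pos hδpos
      nlinarith
    set w : ∀ i, Fin (d i) → ℝ := fun i => cc i • v i with hw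
    have hw0 : ∀ i, w i ≠ 0 := fun i => smul_ne_zero (ne_of_gt (hccpos i)) (hv0 i)
    set A : ∀ i, Set (Fin (d i) → ℝ) :=
      fun i => (fun t : ℝ => xstar i + t • w i) '' (Set.Icc 0 1) with hA
    have hAinf : ∀ i, (A i).Infinite := by
      intro i
      refine Set.Infinite.image ?_ (Set.Icc_infinite (by norm_num))
      intro ta _ tb _ hee
      have h1 : ta • w i = tb • w i := by simpa using add_left_cancel hee
      have h2 : (ta - tb) • w i = 0 := by rw [sub_smul, h1, sub_self]
      rcases smul_eq_zero.1 h2 with h | h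
      · linarith [sub_eq_zero.1 h]
      · exact absurd h (hw0 i)
    apply hfree
    refine ⟨A, hAinf, ?_⟩
    intro x hx
    have hxt : ∀ i, ∃ t : ℝ, (0 ≤ t ∧ t ≤ 1) ∧ x i = xstar i + t • w i := by
      intro i
      obtain ⟨tt, htt, hte⟩ := hx i
      exact ⟨tt, ⟨htt.1, htt.2⟩, hte.symm⟩
    choose t ht hxe using hxt
    have hxeq : x = xstar + fun i => t i • w i := by
      funext i
      rw [hxe i]
      rfl
    have hLx : ∀ q, LL lam q x = LL lam q xstar + ∑ i, t i * (cc i * gB lam q i (v i)) := by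
      intro q
      rw [hxeq, map_add]
      congr 1
      rw [LL_eq_sum_gB]
      refine Finset.sum_congr rfl (fun i _ => ?_)
      show gB lam q i (t i • w i) = _
      rw [hw]
      rw [gB_smul, gB_smul]
    rw [hC]
    intro q
    by_cases hEq : E q
    · have hval : LL lam q x + a q = 0 := by
        have h0 : ∀ i, gB lam q i (v i) = 0 := fun i => hvE i q hEq
        rw [hLx]
        simp only [h0, mul_zero, Finset.sum_const_zero, add_zero]
        exact hEq xstar hstar_mem
      rw [LL_apply] at hval
      refine ⟨fun _ => le_of_eq hval, fun hq => absurd (hEp q hEq) (by omega)⟩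
    · have hbound : ∑ i, t i * (cc i * gB lam q i (v i)) ≤ δ / 2 := by
        have hterm : ∀ i ∈ Finset.univ, t i * (cc i * gB lam q i (v i)) ≤ δ / (2 * r) := by
          intro i _
          have hgabs : |gB lam q i (v i)| ≤ Si i := by
            rw [hSi]
            exact Finset.single_le_sum (f := fun q' => |gB lam q' i (v i)|)
              (fun _ _ => abs_nonneg _) (Finset.mem_univ q)
          have hkey : cc i * (1 + Si i) = δ / (2 * r) := by
            rw [hcc]
            have h1 : (1 + Si i) ≠ 0 := by have := hSinn i; positivity
            field_simp
          have h2 := (ht i).1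
          have h3 := (ht i).2
          have h4 := hccpos i
          have h5 := le_abs_self (gB lam q i (v i))
          have hmul : cc i * gB lam q i (v i) ≤ cc i * (1 + Si i) := by
            have : cc i * |gB lam q i (v i)| ≤ cc i * (1 + Si i) :=
              mul_le_mul_of_nonneg_left (by linarith) h4.le
            nlinarith
          rcases le_or_gt (cc i * gB lam q i (v i)) 0 with hcg | hcg
          · have hnp : t i * (cc i * gB lam q i (v i)) ≤ 0 :=
              mul_nonpos_of_nonneg_of_nonpos h2 hcg
            have : (0:ℝ) ≤ δ / (2 * r) := by positivity
            linarith
          · have hle1 : t i * (cc i * gB lam q i (v i)) ≤ 1 * (cc i * gB lam q i (v i)) :=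
              mul_le_mul_of_nonneg_right h3 hcg.le
            rw [one_mul] at hle1
            linarith
        calc ∑ i, t i * (cc i * gB lam q i (v i)) ≤ ∑ _i : Fin r, δ / (2 * r) :=
              Finset.sum_le_sum hterm
          _ = r * (δ / (2 * r)) := by
              rw [Finset.sum_const, card_univ, Fintype.card_fin, nsmul_eq_mul]
          _ = δ / 2 := by field_simp
      have hfin : LL lam q x + a q < 0 := by
        have h1 := hδle q hEq
        rw [hLx]
        linarith
      rw [LL_apply] at hfin
      exact ⟨fun _ => le_of_lt hfin, fun _ => hfin⟩
  · push_neg at hK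
    obtain ⟨i0, hi0⟩ := hK
    refine ⟨i0, ?_⟩
    intro x hx y hy hxy
    have hv : ∀ q, E q → gB lam q i0 (x i0 - y i0) = 0 := by
      intro q hq
      have hx0 : LL lam q x + a q = 0 := hq x hx
      have hy0 : LL lam q y + a q = 0 := hq y hy
      have hLeq : LL lam q x = LL lam q y := by linarith
      rw [LL_eq_sum_gB, LL_eq_sum_gB] at hLeq
      have hsum : ∑ i, (gB lam q i (x i) - gB lam q i (y i)) =
          gB lam q i0 (x i0) - gB lam q i0 (y i0) := by
        rw [Finset.sum_eq_single i0]
        · intro j _ hj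
          rw [hxy j hj]
          ring
        · intro h
          exact absurd (Finset.mem_univ i0) h
      rw [Finset.sum_sub_distrib] at hsum
      rw [gB_sub]
      linarith
    have hxyi0 : x i0 = y i0 := by
      by_contra hne'
      obtain ⟨q, hqE, hqne⟩ := hi0 (x i0 - y i0) (sub_ne_zero.2 hne')
      exact hqne (hv q hqE)
    funext j
    by_cases hj : j = i0
    · rw [hj]; exact hxyi0
    · exact hxy j hj

lemma count_of_inj (C : Set (∀ i, Fin (d i) → ℝ)) (i0 : Fin r)
    (hinj : ∀ x ∈ C, ∀ y ∈ C, (∀ j, j ≠ i0 → x j = y j) → x = y)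
    (V : ∀ i, Finset (Fin (d i) → ℝ)) :
    {x ∈ C | ∀ i, x i ∈ V i}.ncard ≤ (∑ i, (V i).card) ^ (r - 1) := by
  classical
  set S : Set (∀ i, Fin (d i) → ℝ) := {x ∈ C | ∀ i, x i ∈ V i} with hS
  set W : ∀ j, Finset (Fin (d j) → ℝ) :=
    fun j => if j = i0 then ({0} : Finset (Fin (d j) → ℝ)) else V j with hW
  set π : (∀ i, Fin (d i) → ℝ) → (∀ i, Fin (d i) → ℝ) :=
    fun x => Function.update x i0 0 with hπ
  have hπj : ∀ x, ∀ j, j ≠ i0 → π x j = x j := by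
    intro x j hj
    simp [hπ, Function.update_of_ne hj]
  have hinj' : Set.InjOn π S := by
    intro x hx y hy hxy
    refine hinj x hx.1 y hy.1 (fun j hj => ?_)
    rw [← hπj x j hj, ← hπj y j hj, hxy]
  have himg : π '' S ⊆ ↑(Fintype.piFinset W) := by
    rintro _ ⟨x, hx, rfl⟩
    simp only [Finset.coe_sort_coe, Finset.mem_coe, Fintype.mem_piFinset]
    intro j
    by_cases hj : j = i0
    · subst hj
      simp [hπ, hW]
    · rw [hπj x j hj, hW]
      simp only [if_neg hj]
      exact hx.2 j
  have hcount : S.ncard ≤ (Fintype.piFinset W).card := by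
    rw [← Set.ncard_image_of_injOn hinj']
    have := Set.ncard_le_ncard himg (Set.finite_coe_iff.1 ?_)
    · rwa [Set.ncard_coe_finset] at this
    · exact Set.Finite.to_subtype (Finset.finite_toSet _)
  refine hcount.trans ?_
  rw [Fintype.card_piFinset]
  have hprod : ∏ j, (W j).card = ∏ j ∈ Finset.univ.erase i0, (V j).card := by
    rw [← Finset.mul_prod_erase Finset.univ (fun j => (W j).card) (Finset.mem_univ i0)]
    have h1 : (W i0).card = 1 := by simp [hW]
    have h2 : ∀ j ∈ Finset.univ.erase i0, (W j).card = (V j).card := by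
      intro j hj
      rw [hW]
      simp [Finset.ne_of_mem_erase hj]
    rw [h1, one_mul]
    exact Finset.prod_congr rfl h2
  rw [hprod]
  calc ∏ j ∈ Finset.univ.erase i0, (V j).card
      ≤ ∏ _j ∈ Finset.univ.erase i0, (∑ i, (V i).card) := by
        refine Finset.prod_le_prod' (fun j _ => ?_)
        exact Finset.single_le_sum (f := fun i => (V i).card) (fun _ _ => Nat.zero_le _)
          (Finset.mem_univ j)
    _ = (∑ i, (V i).card) ^ (r - 1) := by
        rw [Finset.prod_const, Finset.card_erase_of_mem (Finset.mem_univ i0),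
          Finset.card_univ, Fintype.card_fin]

/-- If `X ⊆ ℝ^{d₁} × ⋯ × ℝ^{d_r}` (`r ≥ 2`) is semilinear (of some description
complexity) and does not contain a product `A₁ × ⋯ × A_r` of `r` infinite sets, then
there is `α = α(X)` such that for all finite `V_i ⊆ ℝ^{d_i}`, with `n := Σ_i |V_i|`,
one has `|X ∩ (V₁ × ⋯ × V_r)| ≤ α · n^{r-1}`. -/
theorem semilinear_linear_zarankiewicz (r : ℕ) (hr : 2 ≤ r) (d : Fin r → ℕ)
    (X : Set (∀ i, Fin (d i) → ℝ))
    (hsemi : ∃ s t : ℕ, IsSemilinearOfComplexity s t X)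
    (hprod : ¬ ∃ A : ∀ i, Set (Fin (d i) → ℝ), (∀ i, (A i).Infinite) ∧
      {x : ∀ i, Fin (d i) → ℝ | ∀ i, x i ∈ A i} ⊆ X) :
    ∃ α : ℝ, ∀ V : ∀ i, Finset (Fin (d i) → ℝ),
      (Set.ncard {x ∈ X | ∀ i, x i ∈ V i} : ℝ) ≤
        α * ((∑ i, ((V i).card : ℝ)) ^ (r - 1)) := by
  classical
  obtain ⟨s, t, t', ht', Cc, hcells, hXeq⟩ := hsemi
  refine ⟨(t : ℝ), ?_⟩
  intro V
  set n : ℕ := ∑ i, (V i).card with hn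
  have hcell : ∀ j : Fin t', {x ∈ Cc j | ∀ i, x i ∈ V i}.ncard ≤ n ^ (r - 1) := by
    intro j
    rcases Set.eq_empty_or_nonempty (Cc j) with hCe | hCne
    · simp [hCe]
    · obtain ⟨p, hp, lam, a, hCdef⟩ := hcells j
      have hfree : ¬ ∃ A : ∀ i, Set (Fin (d i) → ℝ), (∀ i, (A i).Infinite) ∧
          {x | ∀ i, x i ∈ A i} ⊆ Cc j := by
        rintro ⟨A, hAinf, hAsub⟩
        exact hprod ⟨A, hAinf, hAsub.trans (by rw [hXeq]; exact Set.subset_iUnion Cc j)⟩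
      obtain ⟨i0, hinj⟩ := proj_inj (by omega) p lam a (Cc j) hCdef hCne hfree
      exact count_of_inj (Cc j) i0 hinj V
  have hfinS : ∀ j : Fin t', {x ∈ Cc j | ∀ i, x i ∈ V i}.Finite := by
    intro j
    apply Set.Finite.subset (Finset.finite_toSet (Fintype.piFinset V))
    intro x hx
    simp only [Finset.coe_sort_coe, Finset.mem_coe, Fintype.mem_piFinset]
    exact hx.2
  have hU : {x ∈ X | ∀ i, x i ∈ V i} = ⋃ j, {x ∈ Cc j | ∀ i, x i ∈ V i} := by
    rw [hXeq]
    ext x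
    simp only [Set.mem_iUnion, Set.mem_setOf_eq]
    tauto
  have hUcard : {x ∈ X | ∀ i, x i ∈ V i}.ncard ≤
      ∑ j : Fin t', {x ∈ Cc j | ∀ i, x i ∈ V i}.ncard := by
    rw [hU]
    have hUeq : (⋃ j, {x ∈ Cc j | ∀ i, x i ∈ V i}) =
        ↑(Finset.univ.biUnion fun j => (hfinS j).toFinset) := by
      ext x
      simp [Set.Finite.mem_toFinset, Set.mem_iUnion]
    rw [hUeq, Set.ncard_coe_finset]
    refine (Finset.card_biUnion_le).trans ?_
    refine Finset.sum_le_sum (fun j _ => ?_)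
    exact le_of_eq (Set.ncard_eq_toFinset_card _ (hfinS j)).symm
  have htotal : {x ∈ X | ∀ i, x i ∈ V i}.ncard ≤ t * n ^ (r - 1) := by
    refine hUcard.trans ?_
    calc ∑ j : Fin t', {x ∈ Cc j | ∀ i, x i ∈ V i}.ncard
        ≤ ∑ _j : Fin t', n ^ (r - 1) := Finset.sum_le_sum (fun j _ => hcell j)
      _ = t' * n ^ (r - 1) := by
          rw [Finset.sum_const, Finset.card_univ, Fintype.card_fin, smul_eq_mul]
      _ ≤ t * n ^ (r - 1) := Nat.mul_le_mul_right _ ht'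
  have hcast : (∑ i, ((V i).card : ℝ)) = (n : ℝ) := by
    rw [hn]
    push_cast
    rfl
  rw [hcast]
  exact_mod_cast htotal
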